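/- arXiv:2509.05132 — 2 statements merged into one kernel-verified Lean document; each statement's English description precedes it below -/
import Mathlib

section
/- Let G = (V,E) be an undirected graph on {1,...,n}. The identity labeling is a valid FIN numbering of G if and only if the reversed labeling ν(v) = n + 1 − v is a valid DFS numbering of G. Equivalently, G has no FIN-conflicting pair (v,{u,w}) with w < v < u < p_FIN(v) if and only if G under the reversed labeling has no conflicting pair. -/
open Classical

/-- `adj` is (the adjacency relation of) a simple undirected graph on vertex set `{1,…,n}`. -/
def IsGraphOn (n : ℕ) (adj : ℕ → ℕ → Prop) : Prop :=
  Symmetric adj ∧ ∀ u v, adj u v → 1 ≤ u ∧ u ≤ n ∧ 1 ≤ v ∧ v ≤ n ∧ u ≠ v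

/-- `p(v)`: the largest neighbour of `v` that is smaller than `v`, and `0` if none exists
(`sSup ∅ = 0` in `ℕ`). -/
noncomputable def par (adj : ℕ → ℕ → Prop) (v : ℕ) : ℕ :=
  sSup {u | adj u v ∧ u < v}

/-- `(v, {u,w})` is a conflicting pair: `{u,w}` is an edge and `p(v) < u < v < w`. -/
def Conflict (adj : ℕ → ℕ → Prop) (v u w : ℕ) : Prop :=
  adj u w ∧ par adj v < u ∧ u < v ∧ v < w

/-- One step of a (nondeterministic) depth-first search.  The state consists of the list of
already discovered vertices, in order of discovery and together with the recorded (possibly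
virtual) parent from which each was discovered, and of the stack of active vertices
(the white path, top first). -/
inductive DFSStep (n : ℕ) (adj : ℕ → ℕ → Prop) :
    List (ℕ × ℕ) × List ℕ → List (ℕ × ℕ) × List ℕ → Prop
  | root (v : ℕ) (order : List (ℕ × ℕ)) (hv1 : 1 ≤ v) (hv2 : v ≤ n)
      (hnd : v ∉ order.map Prod.fst) :
      DFSStep n adj (order, []) (order ++ [(v, 0)], [v])
  | descend (v t : ℕ) (order : List (ℕ × ℕ)) (stack : List ℕ)
      (hadj : adj t v) (hnd : v ∉ order.map Prod.fst) :
      DFSStep n adj (order, t :: stack) (order ++ [(v, t)], v :: t :: stack)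
  | backtrack (t : ℕ) (order : List (ℕ × ℕ)) (stack : List ℕ)
      (hall : ∀ u, adj t u → u ∈ order.map Prod.fst) :
      DFSStep n adj (order, t :: stack) (order, stack)

/-- A complete DFS run discovering the vertices in the order given by the list `order`. -/
def DFSRun (n : ℕ) (adj : ℕ → ℕ → Prop) (order : List (ℕ × ℕ)) : Prop :=
  Relation.ReflTransGen (DFSStep n adj) ([], []) (order, [])

/-- The labelling `f` is a valid DFS numbering of the graph: some DFS run discovers the
vertices in the order of increasing labels `1, 2, …, n`. -/
def ValidDFSLabel (n : ℕ) (adj : ℕ → ℕ → Prop) (f : ℕ → ℕ) : Prop :=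
  ∃ order, DFSRun n adj order ∧ (order.map Prod.fst).map f = List.range' 1 n

/-- The identity labelling on `{1,…,n}` is a valid DFS numbering of the graph. -/
def ValidDFS (n : ℕ) (adj : ℕ → ℕ → Prop) : Prop :=
  ValidDFSLabel n adj id

/-- The graph is connected (on its vertex set `{1,…,n}`). -/
def ConnOn (n : ℕ) (adj : ℕ → ℕ → Prop) : Prop :=
  ∀ u v, 1 ≤ u → u ≤ n → 1 ≤ v → v ≤ n → Relation.ReflTransGen adj u v

/-- The degree of a vertex. -/
noncomputable def degree (adj : ℕ → ℕ → Prop) (v : ℕ) : ℕ :=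
  Set.ncard {u | adj u v}

/-- The size `|E △ E'|` of the symmetric difference of the edge sets of two graphs
(given by symmetric adjacency relations). -/
noncomputable def edgeDiff (a b : ℕ → ℕ → Prop) : ℕ :=
  Set.ncard {p : ℕ × ℕ | p.1 < p.2 ∧ ¬(a p.1 p.2 ↔ b p.1 p.2)}

/-- One step of a depth-first search that also records the finishing order.  The state is
`(disc, fin, stack)`: discovered vertices in discovery order, finished vertices in
finishing order, and the stack of active vertices (top first). -/
inductive FINStep (n : ℕ) (adj : ℕ → ℕ → Prop) :
    List ℕ × List ℕ × List ℕ → List ℕ × List ℕ × List ℕ → Prop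
  | root (v : ℕ) (disc fin : List ℕ) (hv1 : 1 ≤ v) (hv2 : v ≤ n) (hnd : v ∉ disc) :
      FINStep n adj (disc, fin, []) (disc ++ [v], fin, [v])
  | descend (v t : ℕ) (disc fin : List ℕ) (stack : List ℕ)
      (hadj : adj t v) (hnd : v ∉ disc) :
      FINStep n adj (disc, fin, t :: stack) (disc ++ [v], fin, v :: t :: stack)
  | backtrack (t : ℕ) (disc fin : List ℕ) (stack : List ℕ)
      (hall : ∀ u, adj t u → u ∈ disc) :
      FINStep n adj (disc, fin, t :: stack) (disc, fin ++ [t], stack)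

/-- The identity labelling on `{1,…,n}` is a valid FIN numbering: some DFS run finishes
the vertices exactly in the order `1, 2, …, n`. -/
def ValidFIN (n : ℕ) (adj : ℕ → ℕ → Prop) : Prop :=
  ∃ disc, Relation.ReflTransGen (FINStep n adj)
    (([], [], []) : List ℕ × List ℕ × List ℕ) (disc, List.range' 1 n, [])

/-- `p_FIN(v)`: the smallest neighbour of `v` larger than `v`, with the sentinel value
`n + 1` (playing the role of `∞`) if no neighbour of `v` exceeds `v`. -/
noncomputable def parFIN (n : ℕ) (adj : ℕ → ℕ → Prop) (v : ℕ) : ℕ :=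
  if ∃ u, adj u v ∧ v < u then sInf {u | adj u v ∧ v < u} else n + 1

/-- A FIN-conflicting pair `(v, {u,w})`: `{u,w} ∈ E` and `w < v < u < p_FIN(v)`. -/
def FINConflict (n : ℕ) (adj : ℕ → ℕ → Prop) (v u w : ℕ) : Prop :=
  adj u w ∧ w < v ∧ v < u ∧ u < parFIN n adj v


open List Relation

section Aux
variable (n : ℕ) (adj : ℕ → ℕ → Prop)

/- ---------- generic list lemmas ---------- -/

lemma mem_range1 (u : ℕ) : u ∈ List.range' 1 n ↔ 1 ≤ u ∧ u ≤ n := by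
  rw [List.mem_range'_1]; omega

/-- reversed complement of `f` inside `range' 1 n`. -/
noncomputable def revN (f : List ℕ) : List ℕ :=
  ((List.range' 1 n).filter (fun x => x ∉ f)).reverse

lemma mem_revN (f : List ℕ) (u : ℕ) :
    u ∈ revN n f ↔ (1 ≤ u ∧ u ≤ n) ∧ u ∉ f := by
  simp only [revN, List.mem_reverse, List.mem_filter, decide_eq_true_eq, mem_range1 n]

lemma revN_nil : revN n [] = (List.range' 1 n).reverse := by
  rw [revN]
  congr 1
  rw [List.filter_eq_self]
  intro x _; simp

lemma revN_all : revN n (List.range' 1 n) = [] := by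
  simp only [revN, List.reverse_eq_nil_iff, List.filter_eq_nil_iff]
  intro a ha
  simp [ha]

lemma filter_not_mem_append (a b : List ℕ) (hnd : (a ++ b).Nodup) :
    (a ++ b).filter (fun x => x ∉ a) = b := by
  rw [List.filter_append]
  have h1 : a.filter (fun x => x ∉ a) = [] := by
    rw [List.filter_eq_nil_iff]; intro x hx; simp [hx]
  have h2 : b.filter (fun x => x ∉ a) = b := by
    rw [List.filter_eq_self]; intro x hx
    have := (List.nodup_append'.mp hnd).2.2
    simp only [decide_eq_true_eq]
    intro hxa; exact this hxa hx
  rw [h1, h2, List.nil_append]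

lemma revN_concat (f : List ℕ) (t : ℕ) (h : (f ++ [t]) <+: List.range' 1 n) :
    revN n f = revN n (f ++ [t]) ++ [t] := by
  obtain ⟨r, hr⟩ := h
  have hnd : (List.range' 1 n).Nodup := List.nodup_range'
  have h1 : (List.range' 1 n).filter (fun x => x ∉ f) = t :: r := by
    have := filter_not_mem_append f ([t] ++ r) (by rw [← List.append_assoc, hr]; exact hnd)
    rw [← List.append_assoc, hr] at this
    simpa using this
  have h2 : (List.range' 1 n).filter (fun x => x ∉ f ++ [t]) = r := by
    have := filter_not_mem_append (f ++ [t]) r (by rw [hr]; exact hnd)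
    rw [hr] at this; exact this
  rw [revN, revN, h1, h2]
  simp

lemma map_rev_range' : (List.range' 1 n).reverse.map (fun v => n + 1 - v) = List.range' 1 n := by
  apply List.ext_getElem
  · simp
  · intro i h1 h2
    have hi : i < n := by simpa using h2
    simp only [List.getElem_map, List.getElem_reverse, List.getElem_range', List.length_range']
    omega

/- ---------- monotonicity ---------- -/

lemma fin_mono {s s' : List ℕ × List ℕ × List ℕ}
    (h : Relation.ReflTransGen (FINStep n adj) s s') : s.2.1 <+: s'.2.1 := by
  induction h with
  | refl => exact List.prefix_rfl
  | tail _ hstep ih =>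
    refine ih.trans ?_
    cases hstep <;> simp [List.prefix_append]

lemma order_mono {s s' : List (ℕ × ℕ) × List ℕ}
    (h : Relation.ReflTransGen (DFSStep n adj) s s') : s.1 <+: s'.1 := by
  induction h with
  | refl => exact List.prefix_rfl
  | tail _ hstep ih =>
    refine ih.trans ?_
    cases hstep <;> simp [List.prefix_append]

/- ---------- invariants ---------- -/

def FInv (s : List ℕ × List ℕ × List ℕ) : Prop :=
  (∀ v ∈ s.2.2, v ∈ s.1) ∧ List.Chain' (fun a b => adj b a) s.2.2 ∧
  (∀ v ∈ s.1, 1 ≤ v ∧ v ≤ n) ∧ (∀ x ∈ s.2.1, ∀ y, adj x y → y ∈ s.1)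

lemma FInv_of (hG : IsGraphOn n adj) {s : List ℕ × List ℕ × List ℕ}
    (h : Relation.ReflTransGen (FINStep n adj) ([], [], []) s) : FInv n adj s := by
  induction h with
  | refl => refine ⟨by simp, List.isChain_nil, by simp, by simp⟩
  | tail _ hstep ih =>
    obtain ⟨i1, i2, i3, i4⟩ := ih
    cases hstep with
    | root v disc fin hv1 hv2 hnd =>
      refine ⟨by simp, List.isChain_singleton _, ?_, fun x hx y hy => List.mem_append_left _ (i4 x hx y hy)⟩
      intro u hu
      rcases List.mem_append.mp hu with h | h
      · exact i3 u h
      · simp at h; omega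
    | descend v t disc fin stack hadj hnd =>
      refine ⟨?_, ?_, ?_, fun x hx y hy => List.mem_append_left _ (i4 x hx y hy)⟩
      · intro u hu
        rcases List.mem_cons.mp hu with h | hu
        · subst h; simp
        · exact List.mem_append_left _ (i1 u hu)
      · exact List.isChain_cons_cons.mpr ⟨hadj, i2⟩
      · intro u hu
        rcases List.mem_append.mp hu with h | h
        · exact i3 u h
        · simp at h; subst h
          have := hG.2 t u hadj
          omega
    | backtrack t disc fin stack hall =>
      refine ⟨fun v hv => i1 v (List.mem_cons_of_mem _ hv), i2.tail, i3, ?_⟩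
      intro x hx y hy
      rcases List.mem_append.mp hx with h | h
      · exact i4 x h y hy
      · simp at h; subst h; exact hall y hy

def DInv (s : List (ℕ × ℕ) × List ℕ) : Prop :=
  (∀ v ∈ s.2, v ∈ s.1.map Prod.fst) ∧ List.Chain' (fun a b => adj b a) s.2 ∧
  s.2.Nodup ∧
  (∀ u ∈ s.1.map Prod.fst, u ∉ s.2 → ∀ y, adj u y → y ∈ s.1.map Prod.fst) ∧
  (∀ u ∈ s.1.map Prod.fst, 1 ≤ u ∧ u ≤ n)

lemma DInv_of (hG : IsGraphOn n adj) {s : List (ℕ × ℕ) × List ℕ}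
    (h : Relation.ReflTransGen (DFSStep n adj) ([], []) s) : DInv n adj s := by
  induction h with
  | refl => refine ⟨by simp, List.isChain_nil, by simp, by simp, by simp⟩
  | tail _ hstep ih =>
    obtain ⟨i1, i2, i3, i4, i5⟩ := ih
    cases hstep with
    | root v order hv1 hv2 hnd =>
      refine ⟨by simp, List.isChain_singleton _, by simp, ?_, ?_⟩
      · intro u hu hu2 y hy
        rw [List.map_append] at hu ⊢
        rcases List.mem_append.mp hu with h | h
        · exact List.mem_append_left _ (i4 u h (by simp) y hy)
        · simp at h; subst h; simp at hu2
      · intro u hu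
        rw [List.map_append] at hu
        rcases List.mem_append.mp hu with h | h
        · exact i5 u h
        · simp at h; omega
    | descend v t order stack hadj hnd =>
      refine ⟨?_, List.isChain_cons_cons.mpr ⟨hadj, i2⟩, ?_, ?_, ?_⟩
      · intro u hu
        rw [List.map_append]
        rcases List.mem_cons.mp hu with h | hu
        · subst h; simp
        · exact List.mem_append_left _ (i1 u hu)
      · exact List.nodup_cons.mpr ⟨fun hc => hnd (i1 v hc), i3⟩
      · intro u hu hu2 y hy
        rw [List.map_append] at hu ⊢
        rcases List.mem_append.mp hu with h | h
        · refine List.mem_append_left _ (i4 u h ?_ y hy)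
          intro hc; exact hu2 (List.mem_cons_of_mem _ hc)
        · simp at h; subst h; simp at hu2
      · intro u hu
        rw [List.map_append] at hu
        rcases List.mem_append.mp hu with h | h
        · exact i5 u h
        · simp at h; subst h
          have := hG.2 t u hadj
          omega
    | backtrack t order stack hall =>
      refine ⟨fun v hv => i1 v (List.mem_cons_of_mem _ hv), i2.tail,
        i3.of_cons, ?_, i5⟩
      intro u hu hu2 y hy
      by_cases hut : u = t
      · subst hut; exact hall y hy
      · exact i4 u hu (by simp [hut, hu2]) y hy

end Aux

section Main
variable (n : ℕ) (adj : ℕ → ℕ → Prop)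

lemma prefix_rev_range' (L : List ℕ) (v : ℕ)
    (h : (L ++ [v]) <+: (List.range' 1 n).reverse) :
    L.length < n ∧ v = n - L.length := by
  have hlen : L.length + 1 ≤ n := by
    have := h.length_le
    simpa using this
  have hget : ((List.range' 1 n).reverse)[L.length]'(by simp; omega) = v := by
    have := h.getElem (i := L.length) (by simp)
    rw [← this]
    simp
  rw [List.getElem_reverse, List.getElem_range'] at hget
  simp only [List.length_range'] at hget
  omega

lemma fin_to_dfs (hG : IsGraphOn n adj) (dscf : List ℕ)
    (h : Relation.ReflTransGen (FINStep n adj) ([], [], []) (dscf, List.range' 1 n, [])) :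
    ∃ ord : List (ℕ × ℕ), ord.map Prod.fst = (List.range' 1 n).reverse ∧
      Relation.ReflTransGen (DFSStep n adj) ([], []) (ord, []) := by
  suffices H : ∀ s (_ : Relation.ReflTransGen (FINStep n adj) s (dscf, List.range' 1 n, [])),
      Relation.ReflTransGen (FINStep n adj) ([], [], []) s →
      ∃ ord : List (ℕ × ℕ), ord.map Prod.fst = revN n s.2.1 ∧
        Relation.ReflTransGen (DFSStep n adj) ([], []) (ord, s.2.2) by
    obtain ⟨ord, h1, h2⟩ := H ([], [], []) h Relation.ReflTransGen.refl
    exact ⟨ord, by rwa [revN_nil] at h1, h2⟩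
  intro s hs
  induction hs using Relation.ReflTransGen.head_induction_on with
  | refl =>
    intro _
    exact ⟨[], by simp [revN_all], Relation.ReflTransGen.refl⟩
  | head hstep htail ih =>
    rename_i a c
    intro hreach
    have hreach_c : Relation.ReflTransGen (FINStep n adj) ([], [], []) c := hreach.tail hstep
    obtain ⟨inv1, inv2, inv3, inv4⟩ := FInv_of n adj hG hreach
    obtain ⟨ord, hmap, hrun⟩ := ih hreach_c
    cases hstep with
    | root v disc fin hv1 hv2 hnd =>
      dsimp only at hmap hrun ⊢
      refine ⟨ord, hmap, hrun.tail ?_⟩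
      refine DFSStep.backtrack v ord [] ?_
      intro u hu
      rw [hmap, mem_revN]
      obtain ⟨_, _, hu1, hu2, _⟩ := hG.2 v u hu
      refine ⟨⟨hu1, hu2⟩, fun hc => ?_⟩
      exact hnd (inv4 u hc v (hG.1 hu))
    | descend v t disc fin stack hadj hnd =>
      dsimp only at hmap hrun ⊢
      refine ⟨ord, hmap, hrun.tail ?_⟩
      refine DFSStep.backtrack v ord (t :: stack) ?_
      intro u hu
      rw [hmap, mem_revN]
      obtain ⟨_, _, hu1, hu2, _⟩ := hG.2 v u hu
      refine ⟨⟨hu1, hu2⟩, fun hc => ?_⟩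
      exact hnd (inv4 u hc v (hG.1 hu))
    | backtrack t disc fin stack hall =>
      dsimp only at hmap hrun ⊢
      have hpre : (fin ++ [t]) <+: List.range' 1 n := fin_mono n adj htail
      have hsplit : revN n fin = revN n (fin ++ [t]) ++ [t] := revN_concat n fin t hpre
      have htmem : t ∈ disc := inv1 t (by simp)
      have htb := inv3 t htmem
      have htord : t ∉ ord.map Prod.fst := by
        rw [hmap, mem_revN]
        simp
      cases stack with
      | nil =>
        refine ⟨ord ++ [(t, 0)], ?_, hrun.tail ?_⟩
        · rw [hsplit, List.map_append, hmap]; rfl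
        · exact DFSStep.root t ord htb.1 htb.2 htord
      | cons t2 rest =>
        refine ⟨ord ++ [(t, t2)], ?_, hrun.tail ?_⟩
        · rw [hsplit, List.map_append, hmap]; rfl
        · refine DFSStep.descend t t2 ord rest ?_ htord
          exact (List.isChain_cons_cons.mp inv2).1

end Main

section Main2
variable (n : ℕ) (adj : ℕ → ℕ → Prop)

lemma range'_succ_concat (m : ℕ) : List.range' 1 (m + 1) = List.range' 1 m ++ [m + 1] := by
  have := List.range'_concat (step := 1) (s := 1) (n := m)
  simpa [Nat.add_comm] using this

lemma dfs_to_fin (hG : IsGraphOn n adj) (ordF : List (ℕ × ℕ))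
    (hmapF : ordF.map Prod.fst = (List.range' 1 n).reverse)
    (h : Relation.ReflTransGen (DFSStep n adj) ([], []) (ordF, [])) :
    ValidFIN n adj := by
  suffices H : ∀ s (_ : Relation.ReflTransGen (DFSStep n adj) s (ordF, [])),
      Relation.ReflTransGen (DFSStep n adj) ([], []) s →
      ∃ dsc : List ℕ,
        (∀ u, u ∈ dsc ↔ (1 ≤ u ∧ u ≤ n) ∧ (u ∈ s.1.map Prod.fst → u ∈ s.2)) ∧
        Relation.ReflTransGen (FINStep n adj) ([], [], [])
          (dsc, List.range' 1 (n - s.1.length), s.2) by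
    obtain ⟨dsc, _, h2⟩ := H ([], []) h Relation.ReflTransGen.refl
    exact ⟨dsc, by simpa using h2⟩
  intro s hs
  induction hs using Relation.ReflTransGen.head_induction_on with
  | refl =>
    intro _
    have hlenF : ordF.length = n := by
      have := congrArg List.length hmapF
      simpa using this
    refine ⟨[], ?_, ?_⟩
    · intro u
      simp only [List.not_mem_nil, false_iff]
      rintro ⟨⟨hu1, hu2⟩, himp⟩
      have : u ∈ ordF.map Prod.fst := by
        rw [hmapF, List.mem_reverse, mem_range1]
        exact ⟨hu1, hu2⟩
      simpa using himp this
    · simp only [hlenF, Nat.sub_self]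
      exact Relation.ReflTransGen.refl
  | head hstep htail ih =>
    rename_i a c
    intro hreach
    have hreach_c : Relation.ReflTransGen (DFSStep n adj) ([], []) c := hreach.tail hstep
    obtain ⟨inv1, inv2, inv3, inv4, inv5⟩ := DInv_of n adj hG hreach
    obtain ⟨dsc, hiff, hrun⟩ := ih hreach_c
    cases hstep with
    | root v order hv1 hv2 hnd =>
      dsimp only at hiff hrun inv1 inv2 inv3 inv4 inv5 ⊢
      have hpre : (order.map Prod.fst ++ [v]) <+: (List.range' 1 n).reverse := by
        have h1 : (order ++ [(v, 0)]) <+: ordF := order_mono n adj htail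
        have := h1.map Prod.fst
        rw [hmapF] at this
        simpa using this
      obtain ⟨hlt, hv⟩ := prefix_rev_range' n (order.map Prod.fst) v hpre
      have hlen : order.length < n := by simpa using hlt
      have hfin : List.range' 1 (n - order.length) =
          List.range' 1 (n - (order ++ [(v, 0)]).length) ++ [v] := by
        have h2 : n - order.length = (n - (order ++ [(v, 0)]).length) + 1 := by
          simp; omega
        rw [h2, range'_succ_concat]
        congr 2
        simp at hv ⊢
        omega
      refine ⟨dsc, ?_, ?_⟩
      · intro u
        rw [hiff u]
        constructor
        · rintro ⟨hb, himp⟩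
          refine ⟨hb, fun hu => ?_⟩
          exfalso
          have hu' : u ∈ (order ++ [(v, 0)]).map Prod.fst := by
            rw [List.map_append]; exact List.mem_append_left _ hu
          have := himp hu'
          simp at this
          subst this
          exact hnd hu
        · rintro ⟨hb, himp⟩
          refine ⟨hb, fun hu => ?_⟩
          rw [List.map_append] at hu
          rcases List.mem_append.mp hu with hx | hx
          · exact absurd (himp hx) (by simp)
          · simp at hx; subst hx; simp
      · rw [hfin]
        refine hrun.tail ?_
        exact FINStep.backtrack v dsc _ [] (fun u hu => by
          rw [hiff u]
          obtain ⟨_, _, hu1, hu2, hne⟩ := hG.2 v u hu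
          refine ⟨⟨hu1, hu2⟩, fun hx => ?_⟩
          rw [List.map_append] at hx
          rcases List.mem_append.mp hx with hx | hx
          · exfalso
            exact hnd (inv4 u hx (by simp) v (hG.1 hu))
          · simp at hx; subst hx; simp)
    | descend v t order stack hadj hnd =>
      dsimp only at hiff hrun inv1 inv2 inv3 inv4 inv5 ⊢
      have hpre : (order.map Prod.fst ++ [v]) <+: (List.range' 1 n).reverse := by
        have h1 : (order ++ [(v, t)]) <+: ordF := order_mono n adj htail
        have := h1.map Prod.fst
        rw [hmapF] at this
        simpa using this
      obtain ⟨hlt, hv⟩ := prefix_rev_range' n (order.map Prod.fst) v hpre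
      have hlen : order.length < n := by simpa using hlt
      have hfin : List.range' 1 (n - order.length) =
          List.range' 1 (n - (order ++ [(v, t)]).length) ++ [v] := by
        have h2 : n - order.length = (n - (order ++ [(v, t)]).length) + 1 := by
          simp; omega
        rw [h2, range'_succ_concat]
        congr 2
        simp at hv ⊢
        omega
      refine ⟨dsc, ?_, ?_⟩
      · intro u
        rw [hiff u]
        constructor
        · rintro ⟨hb, himp⟩
          refine ⟨hb, fun hu => ?_⟩
          have hu' : u ∈ (order ++ [(v, t)]).map Prod.fst := by
            rw [List.map_append]; exact List.mem_append_left _ hu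
          have := himp hu'
          rcases List.mem_cons.mp this with h' | h'
          · subst h'; exact absurd hu hnd
          · exact h'
        · rintro ⟨hb, himp⟩
          refine ⟨hb, fun hu => ?_⟩
          rw [List.map_append] at hu
          rcases List.mem_append.mp hu with hx | hx
          · exact List.mem_cons_of_mem _ (himp hx)
          · simp at hx; subst hx; simp
      · rw [hfin]
        refine hrun.tail ?_
        exact FINStep.backtrack v dsc _ (t :: stack) (fun u hu => by
          rw [hiff u]
          obtain ⟨_, _, hu1, hu2, hne⟩ := hG.2 v u hu
          refine ⟨⟨hu1, hu2⟩, fun hx => ?_⟩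
          rw [List.map_append] at hx
          rcases List.mem_append.mp hx with hx | hx
          · by_cases hus : u ∈ t :: stack
            · exact List.mem_cons_of_mem _ hus
            · exact absurd (inv4 u hx hus v (hG.1 hu)) hnd
          · simp at hx; subst hx; simp)
    | backtrack t order stack hall =>
      dsimp only at hiff hrun inv1 inv2 inv3 inv4 inv5 ⊢
      have htord : t ∈ order.map Prod.fst := inv1 t (by simp)
      have htb : 1 ≤ t ∧ t ≤ n := inv5 t htord
      have htdsc : t ∉ dsc := by
        rw [hiff t]
        rintro ⟨_, himp⟩
        have := himp htord
        exact (List.nodup_cons.mp inv3).1 this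
      have hstep2 : FINStep n adj (dsc, List.range' 1 (n - order.length), stack)
          (dsc ++ [t], List.range' 1 (n - order.length), t :: stack) := by
        cases stack with
        | nil => exact FINStep.root t dsc _ htb.1 htb.2 htdsc
        | cons t2 rest =>
          exact FINStep.descend t t2 dsc _ rest (List.isChain_cons_cons.mp inv2).1 htdsc
      refine ⟨dsc ++ [t], ?_, hrun.tail hstep2⟩
      intro u
      rw [List.mem_append, hiff u]
      constructor
      · rintro (⟨hb, himp⟩ | hu)
        · exact ⟨hb, fun hx => List.mem_cons_of_mem _ (himp hx)⟩
        · simp at hu; subst hu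
          exact ⟨htb, fun _ => by simp⟩
      · rintro ⟨hb, himp⟩
        by_cases hx : u ∈ order.map Prod.fst
        · rcases List.mem_cons.mp (himp hx) with h' | h'
          · subst h'; right; simp
          · exact Or.inl ⟨hb, fun _ => h'⟩
        · exact Or.inl ⟨hb, fun hc => absurd hc hx⟩

end Main2

section Conf
variable (n : ℕ) (adj : ℕ → ℕ → Prop)

lemma conflict_iff (hG : IsGraphOn n adj) :
    (∃ v u w, FINConflict n adj v u w) ↔
      ∃ v u w, Conflict (fun a b => adj (n + 1 - a) (n + 1 - b)) v u w := by
  constructor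
  · rintro ⟨v, u, w, hadj, h1, h2, h3⟩
    obtain ⟨hu1, hu2, hw1, hw2, hne⟩ := hG.2 u w hadj
    have hv1 : 1 ≤ v := by omega
    have hv2 : v ≤ n := by omega
    refine ⟨n + 1 - v, n + 1 - u, n + 1 - w, ?_, ?_, by omega, by omega⟩
    · have e1 : n + 1 - (n + 1 - u) = u := by omega
      have e2 : n + 1 - (n + 1 - w) = w := by omega
      simpa [e1, e2] using hadj
    · -- par of relabelled graph at n+1-v is < n+1-u
      rw [par]
      set T := {x | adj (n + 1 - x) (n + 1 - (n + 1 - v)) ∧ x < n + 1 - v} with hT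
      have ev : n + 1 - (n + 1 - v) = v := by omega
      have key : ∀ x ∈ T, x < n + 1 - u := by
        intro x hx
        obtain ⟨hx1, hx2⟩ := hx
        rw [ev] at hx1
        obtain ⟨hy1, hy2, _, _, _⟩ := hG.2 (n + 1 - x) v hx1
        have hyv : v < n + 1 - x := by omega
        have hS : (n + 1 - x) ∈ {y | adj y v ∧ v < y} := ⟨hx1, hyv⟩
        have hpar : parFIN n adj v = sInf {y | adj y v ∧ v < y} := by
          rw [parFIN, if_pos ⟨n + 1 - x, hx1, hyv⟩]
        have : parFIN n adj v ≤ n + 1 - x := hpar ▸ Nat.sInf_le hS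
        omega
      by_cases hne : T.Nonempty
      · have hbdd : BddAbove T := by
          refine ⟨n, fun x hx => ?_⟩
          obtain ⟨hx1, _⟩ := hx
          obtain ⟨hy1, hy2, _, _, _⟩ := hG.2 _ _ hx1
          omega
        exact key _ (Nat.sSup_mem hne hbdd)
      · rw [Set.not_nonempty_iff_eq_empty] at hne
        rw [hne, csSup_empty]
        simp only [Nat.bot_eq_zero]
        omega
  · rintro ⟨v, u, w, hadj, hpar, huv, hvw⟩
    obtain ⟨hu1, hu2, hw1, hw2, hne⟩ := hG.2 (n + 1 - u) (n + 1 - w) hadj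
    have hub : 1 ≤ u ∧ u ≤ n := by omega
    have hwb : 1 ≤ w ∧ w ≤ n := by omega
    have hvb : 1 ≤ v ∧ v ≤ n := by omega
    refine ⟨n + 1 - v, n + 1 - u, n + 1 - w, hadj, by omega, by omega, ?_⟩
    rw [parFIN]
    split_ifs with hS
    · obtain ⟨y, hy⟩ := hS
      have hsmem := Nat.sInf_mem (⟨y, hy⟩ : Set.Nonempty {y | adj y (n + 1 - v) ∧ n + 1 - v < y})
      set ys := sInf {y | adj y (n + 1 - v) ∧ n + 1 - v < y} with hys
      obtain ⟨hs1, hs2⟩ := hsmem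
      obtain ⟨hys1, hys2, _, _, _⟩ := hG.2 ys (n + 1 - v) hs1
      -- n+1-ys belongs to the par-set of the relabelled graph at v
      have hmemT : (n + 1 - ys) ∈ {x | adj (n + 1 - x) (n + 1 - v) ∧ x < v} := by
        constructor
        · have : n + 1 - (n + 1 - ys) = ys := by omega
          rw [this]; exact hs1
        · omega
      have hbdd : BddAbove {x | adj (n + 1 - x) (n + 1 - v) ∧ x < v} := by
        refine ⟨n, fun x hx => ?_⟩
        obtain ⟨hx1, _⟩ := hx
        obtain ⟨h1, h2, _, _, _⟩ := hG.2 _ _ hx1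
        omega
      have hle : n + 1 - ys ≤ par (fun a b => adj (n + 1 - a) (n + 1 - b)) v :=
        le_csSup hbdd hmemT
      omega
    · omega

end Conf

/-- The identity labelling is a valid FIN numbering of `G` iff the
reversed labelling `ν(v) = n + 1 - v` is a valid DFS numbering of `G`.  Equivalently,
`G` has no FIN-conflicting pair iff the graph relabelled by `ν` (i.e. with adjacency
`adj (n+1-a) (n+1-b)`) has no conflicting pair. -/
theorem validFIN_iff_reverse_validDFS (n : ℕ) (adj : ℕ → ℕ → Prop)
    (hG : IsGraphOn n adj) :
    (ValidFIN n adj ↔ ValidDFSLabel n adj (fun v => n + 1 - v)) ∧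
    ((¬∃ v u w, FINConflict n adj v u w) ↔
      ¬∃ v u w, Conflict (fun a b => adj (n + 1 - a) (n + 1 - b)) v u w) := by
  constructor
  · constructor
    · rintro ⟨disc, h⟩
      obtain ⟨ord, hmap, hrun⟩ := fin_to_dfs n adj hG disc h
      refine ⟨ord, hrun, ?_⟩
      rw [hmap]
      exact map_rev_range' n
    · rintro ⟨ord, hrun, hlab⟩
      set L := ord.map Prod.fst with hL
      have hb : ∀ x ∈ L, 1 ≤ x ∧ x ≤ n := by
        intro x hx
        have hm : (fun v => n + 1 - v) x ∈ List.range' 1 n := by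
          rw [← hlab]
          exact List.mem_map_of_mem hx
        rw [mem_range1] at hm
        dsimp only at hm
        omega
      have key : (L.map (fun v => n + 1 - v)).map (fun y => n + 1 - y) = L := by
        rw [List.map_map]
        conv_rhs => rw [← List.map_id L]
        apply List.map_congr_left
        intro x hx
        have := hb x hx
        simp only [Function.comp_apply, id_eq]
        omega
      have h2 : (List.range' 1 n).map (fun y => n + 1 - y) = (List.range' 1 n).reverse := by
        apply List.reverse_injective
        rw [List.reverse_reverse, ← List.map_reverse]
        exact map_rev_range' n
      have hmap : L = (List.range' 1 n).reverse := by
        rw [← key, hlab, h2]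
      exact dfs_to_fin n adj hG ord hmap hrun
  · exact not_congr (conflict_iff n adj hG)
end

section
/- Let G be an undirected graph whose identity labeling on {1,...,n} corresponds to a valid FIN numbering, and define p_FIN(v) = min{u ∈ N(v) : u > v} (or ∞ if no neighbor exceeds v). Consider the tree T_FIN on vertex set {1,...,n} ∪ {∞} rooted at ∞ with edges {p_FIN(v), v} for all v. Then G has no cross edges with respect to T_FIN: for every edge {u,w} ∈ E, either u is an ancestor of w in T_FIN or w is an ancestor of u. -/
open Classical

section NoCross

variable {n : ℕ} {adj : ℕ → ℕ → Prop}

/-- The invariant maintained by `FINStep`. -/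
def FinInv (st : List ℕ × List ℕ × List ℕ) (adj : ℕ → ℕ → Prop) : Prop :=
  (∀ x ∈ st.2.1, ∀ y, adj x y → y ∈ st.1) ∧
  (∀ x ∈ st.1, x ∈ st.2.1 ∨ x ∈ st.2.2) ∧
  st.2.2.Chain' (fun a b => adj b a)

lemma finInv_step {a b : List ℕ × List ℕ × List ℕ} (h : FINStep n adj a b)
    (hI : FinInv a adj) : FinInv b adj := by
  obtain ⟨hP, hD, hC⟩ := hI
  cases h with
  | root v disc fin hv1 hv2 hnd =>
    refine ⟨fun x hx y hxy => List.mem_append_left _ (hP x hx y hxy), ?_, by simp [List.Chain']⟩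
    intro x hx
    rcases List.mem_append.1 hx with hx | hx
    · rcases hD x hx with h' | h'
      · exact Or.inl h'
      · simp at h'
    · simp at hx; simp [hx]
  | descend v t disc fin stack hadj hnd =>
    refine ⟨fun x hx y hxy => List.mem_append_left _ (hP x hx y hxy), ?_, ?_⟩
    · intro x hx
      rcases List.mem_append.1 hx with hx | hx
      · rcases hD x hx with h' | h'
        · exact Or.inl h'
        · exact Or.inr (List.mem_cons_of_mem _ h')
      · simp at hx; simp [hx]
    · exact List.IsChain.cons_cons hadj hC
  | backtrack t disc fin stack hall =>
    refine ⟨?_, ?_, hC.tail⟩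
    · intro x hx y hxy
      rcases List.mem_append.1 hx with hx | hx
      · exact hP x hx y hxy
      · simp at hx; subst hx; exact hall y hxy
    · intro x hx
      rcases hD x hx with h' | h'
      · exact Or.inl (List.mem_append_left _ h')
      · rcases List.mem_cons.1 h' with h' | h'
        · exact Or.inl (List.mem_append_right _ (by simp [h']))
        · exact Or.inr h'

lemma finInv_of_run {b : List ℕ × List ℕ × List ℕ}
    (h : Relation.ReflTransGen (FINStep n adj) ([], [], []) b) : FinInv b adj := by
  induction h with
  | refl => exact ⟨by simp, by simp, by simp [List.Chain']⟩
  | tail _ hstep ih => exact finInv_step hstep ih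

/-- Once the run finishes (empty stack), the finish list extends the old one by a list
of which the old stack is a sublist. -/
lemma fin_suffix {a b : List ℕ × List ℕ × List ℕ}
    (h : Relation.ReflTransGen (FINStep n adj) a b) (hb : b.2.2 = []) :
    ∃ g, b.2.1 = a.2.1 ++ g ∧ a.2.2.Sublist g := by
  induction h using Relation.ReflTransGen.head_induction_on with
  | refl => exact ⟨[], by simp, by simp [hb]⟩
  | head hstep _ ih =>
    obtain ⟨g, hg, hs⟩ := ih
    cases hstep with
    | root v disc fin hv1 hv2 hnd => exact ⟨g, hg, List.nil_sublist g⟩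
    | descend v t disc fin stack hadj hnd =>
      exact ⟨g, hg, ((t :: stack).sublist_cons_self v).trans hs⟩
    | backtrack t disc fin stack hall =>
      exact ⟨t :: g, by simpa using hg, List.Sublist.cons₂ t hs⟩

/-- Locate the moment a vertex `x` is finished. -/
lemma finish_moment {a b : List ℕ × List ℕ × List ℕ}
    (h : Relation.ReflTransGen (FINStep n adj) a b) (x : ℕ)
    (hxb : x ∈ b.2.1) (hxa : x ∉ a.2.1) :
    ∃ d f s, Relation.ReflTransGen (FINStep n adj) a (d, f, x :: s) ∧
      (∀ y, adj x y → y ∈ d) ∧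
      Relation.ReflTransGen (FINStep n adj) (d, f ++ [x], s) b := by
  induction h using Relation.ReflTransGen.head_induction_on with
  | refl => exact absurd hxb hxa
  | @head a' c hstep hrest ih =>
    by_cases hc : x ∈ c.2.1
    · by_cases hxc : x ∈ a'.2.1
      · exact absurd hxc hxa
      · -- the step itself must finish x, unless fin unchanged
        cases hstep with
        | root v disc fin hv1 hv2 hnd =>
          obtain ⟨d, f, s, h1, h2, h3⟩ := ih hxc
          exact ⟨d, f, s, Relation.ReflTransGen.head (FINStep.root v disc fin hv1 hv2 hnd) h1,
            h2, h3⟩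
        | descend v t disc fin stack hadj hnd =>
          obtain ⟨d, f, s, h1, h2, h3⟩ := ih hxc
          exact ⟨d, f, s,
            Relation.ReflTransGen.head (FINStep.descend v t disc fin stack hadj hnd) h1, h2, h3⟩
        | backtrack t disc fin stack hall =>
          have hx : x = t := by
            rcases List.mem_append.1 hc with h' | h'
            · exact absurd h' hxc
            · simpa using h'
          subst hx
          exact ⟨disc, fin, stack, Relation.ReflTransGen.refl, hall, hrest⟩
    · obtain ⟨d, f, s, h1, h2, h3⟩ := ih hc
      exact ⟨d, f, s, Relation.ReflTransGen.head hstep h1, h2, h3⟩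

lemma no_finConflict (hG : IsGraphOn n adj) (hvalid : ValidFIN n adj)
    (v u w : ℕ) : ¬ FINConflict n adj v u w := by
  rintro ⟨hadjuw, hwv, hvu, hupar⟩
  obtain ⟨disc, hrun⟩ := hvalid
  obtain ⟨_, hun, _, hwn, huw⟩ := hG.2 u w hadjuw
  obtain ⟨h1w, _, _, _, _⟩ := hG.2 w u (hG.1 hadjuw)
  have hv1 : 1 ≤ v := h1w.trans hwv.le
  have hvn : v ≤ n := le_trans hvu.le hun
  have hvmem : v ∈ List.range' 1 n := List.mem_range'_1.2 ⟨hv1, by omega⟩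
  obtain ⟨d, f, s, run1, hNbr, run2⟩ :=
    finish_moment (a := (([], [], []) : List ℕ × List ℕ × List ℕ))
      (b := (disc, List.range' 1 n, [])) hrun v hvmem (by simp)
  obtain ⟨g, hg, hsub⟩ := fin_suffix run2 rfl
  simp only at hg
  -- `hg : List.range' 1 n = (f ++ [v]) ++ g`
  have hpw : (f ++ [v] ++ g).Pairwise (· < ·) := hg ▸ List.pairwise_lt_range' (s := 1) (n := n)
  obtain ⟨hpw1, hpw2, hpw3⟩ := List.pairwise_append.1 hpw
  have hgall : ∀ x ∈ g, v < x := fun x hx => hpw3 v (by simp) x hx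
  have hfall : ∀ x ∈ f, x < v := by
    intro x hx
    obtain ⟨_, _, h3⟩ := List.pairwise_append.1 hpw1
    exact h3 x hx v (by simp)
  -- w is already finished
  have hwf : w ∈ f := by
    have hwmem : w ∈ List.range' 1 n := List.mem_range'_1.2 ⟨h1w, by omega⟩
    rw [hg] at hwmem
    rcases List.mem_append.1 hwmem with h' | h'
    · rcases List.mem_append.1 h' with h' | h'
      · exact h'
      · simp at h'; omega
    · exact absurd (hgall w h') (by omega)
  obtain ⟨hP, hD, hC⟩ := finInv_of_run run1
  have hud : u ∈ d := hP w hwf u (hG.1 hadjuw)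
  have hus : u ∈ v :: s := by
    rcases hD u hud with h' | h'
    · exact absurd (hfall u h') (by omega)
    · exact h'
  have hus' : u ∈ s := by
    rcases List.mem_cons.1 hus with h' | h'
    · omega
    · exact h'
  obtain ⟨t', s', rfl⟩ : ∃ t' s', s = t' :: s' := by
    cases s with
    | nil => simp at hus'
    | cons a l => exact ⟨a, l, rfl⟩
  have hadjt' : adj t' v := (List.isChain_cons_cons.1 hC).1
  have ht'g : t' ∈ g := hsub.mem (by simp)
  have hvt' : v < t' := hgall t' ht'g
  -- parFIN v ≤ t'
  have hpar : parFIN n adj v ≤ t' := by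
    rw [parFIN, if_pos ⟨t', hadjt', hvt'⟩]
    exact Nat.sInf_le ⟨hadjt', hvt'⟩
  -- t' ≤ u since s is sorted (sublist of sorted g, sublist of sorted range')
  have hsorted : (t' :: s').Pairwise (· < ·) := by
    have hgsub : g.Sublist (List.range' 1 n) := by
      rw [hg]; exact (List.sublist_append_right _ g)
    exact (List.pairwise_lt_range' (s := 1) (n := n)).sublist (hsub.trans hgsub)
  have ht'u : t' ≤ u := by
    rcases List.mem_cons.1 hus' with h' | h'
    · omega
    · exact (List.pairwise_cons.1 hsorted).1 u h' |>.le
  omega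

lemma climb (hG : IsGraphOn n adj) (hnc : ∀ v u w, ¬ FINConflict n adj v u w)
    (u w : ℕ) (hadj : adj u w) (hwu : w < u) :
    Relation.ReflTransGen (fun a b => b = parFIN n adj a) w u := by
  obtain ⟨_, hun, _, _, _⟩ := hG.2 u w hadj
  suffices h : ∀ k v, w ≤ v → v < u → u - v ≤ k →
      Relation.ReflTransGen (fun a b => b = parFIN n adj a) v u by
    exact h (u - w) w le_rfl hwu le_rfl
  intro k
  induction k with
  | zero => intro v _ h2 h3; omega
  | succ k ih =>
    intro v hwv hvu hk
    have hstep : v < parFIN n adj v ∧ parFIN n adj v ≤ u := by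
      rcases eq_or_lt_of_le hwv with heq | hlt
      · have hadj' : adj u v := heq ▸ hadj
        have hne : ∃ x, adj x v ∧ v < x := ⟨u, hadj', hvu⟩
        rw [parFIN, if_pos hne]
        exact ⟨(Nat.sInf_mem hne).2, Nat.sInf_le ⟨hadj', hvu⟩⟩
      · have hle : parFIN n adj v ≤ u := by
          by_contra h'
          exact hnc v u w ⟨hadj, hlt, hvu, lt_of_not_ge h'⟩
        have hne : ∃ x, adj x v ∧ v < x := by
          by_contra h'
          rw [parFIN, if_neg h'] at hle
          omega
        rw [parFIN, if_pos hne] at hle ⊢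
        exact ⟨(Nat.sInf_mem hne).2, hle⟩
    obtain ⟨h1, h2⟩ := hstep
    rcases eq_or_lt_of_le h2 with he | hlt
    · exact Relation.ReflTransGen.single he.symm
    · exact Relation.ReflTransGen.head rfl (ih (parFIN n adj v) (by omega) hlt (by omega))

end NoCross

/-- **no cross edges w.r.t. `T_FIN`.** Suppose the identity labelling of `G`
is a valid FIN numbering.  Consider the tree `T_FIN` on `{1,…,n} ∪ {∞}` (with `∞`
represented by the sentinel `n + 1`) rooted at `∞`, in which the parent of every vertex `v`
is `p_FIN(v)`.  Then for every edge `{u,w} ∈ E`, either `u` is an ancestor of `w` in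
`T_FIN` or `w` is an ancestor of `u` (ancestry being the reflexive-transitive closure of
the child–parent relation). -/

theorem no_cross_edges (n : ℕ) (adj : ℕ → ℕ → Prop) (hG : IsGraphOn n adj)
    (hvalid : ValidFIN n adj) (u w : ℕ) (hadj : adj u w) :
    Relation.ReflTransGen (fun a b => b = parFIN n adj a) w u ∨
    Relation.ReflTransGen (fun a b => b = parFIN n adj a) u w := by
  have hnc := no_finConflict hG hvalid
  obtain ⟨_, _, _, _, huw⟩ := hG.2 u w hadj
  rcases lt_or_gt_of_ne huw with h | h
  · exact Or.inr (climb hG hnc w u (hG.1 hadj) h)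
  · exact Or.inl (climb hG hnc u w hadj h)
end
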